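/- For all x > 0 and every integer n ≥ 4, |ln Γ(x+1) - ln√(2π) - (x + 1/2)ln x + x - (x/2)·ln(x·sinh(1/x)) - Σ_{k=3}^{n-1} a_k/x^{2k-1}| ≤ |B_{2n}|/(2n(2n-1)·x^{2n-1}), where a_k = (2k(2k-2)! - 2^{2k-1})·B_{2k}/(2k·(2k)!). -/

import Mathlib

open Real

lemma two_pow_fact : ∀ n : ℕ, 4 ≤ n → 2^(2*n-1)*(2*n-1) ≤ (2*n).factorial := by
  intro n hn
  induction n, hn using Nat.le_induction with
  | base => decide
  | succ n hn ih =>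
    obtain ⟨m, hm⟩ : ∃ m, 2*n = m+1 := ⟨2*n-1, by omega⟩
    have h7 : 7 ≤ m := by omega
    have e1 : 2*n-1 = m := by omega
    have e2 : 2*(n+1)-1 = m+2 := by omega
    have e3 : 2*(n+1) = m+3 := by omega
    rw [e1, hm] at ih
    rw [e2, e3]
    have hf : (m+3).factorial = (m+3)*((m+2)*(m+1).factorial) := by
      rw [Nat.factorial_succ, Nat.factorial_succ]
    rw [hf, pow_succ, pow_succ]
    calc 2 ^ m * 2 * 2 * (m + 2) = 2^m * (4*(m+2)) := by ring
      _ ≤ 2^m * ((m+3)*(m+2)*m) := by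
          apply Nat.mul_le_mul_left
          have h4 : 4 ≤ (m+3)*m := by nlinarith
          calc 4*(m+2) ≤ ((m+3)*m)*(m+2) := Nat.mul_le_mul_right _ h4
            _ = (m+3)*(m+2)*m := by ring
      _ = (m+3)*(m+2)*(2^m*m) := by ring
      _ ≤ (m+3)*(m+2)*(m+1).factorial := Nat.mul_le_mul_left _ ih
      _ = (m+3)*((m+2)*(m+1).factorial) := by ring

lemma term_split (x : ℝ) (hx : 0 < x) (k : ℕ) (hk : 1 ≤ k) :
    ((((2 * k) * Nat.factorial (2 * k - 2) : ℕ) : ℝ) - (2 : ℝ) ^ (2 * k - 1)) *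
        (bernoulli (2 * k) : ℝ) / ((2*(k:ℝ)) * (Nat.factorial (2 * k) : ℝ)) / x ^ (2 * k - 1)
    = (bernoulli (2 * k) : ℝ) / ((2*(k:ℝ)) * (2*(k:ℝ) - 1) * x ^ (2 * k - 1))
      - x / 2 * ((2:ℝ) ^ (2 * k) * (bernoulli (2 * k) : ℝ) * (1/x) ^ (2 * k)
            / ((2*(k:ℝ)) * (Nat.factorial (2 * k) : ℝ))) := by
  obtain ⟨j, rfl⟩ : ∃ j, k = j + 1 := ⟨k - 1, by omega⟩
  have e1 : 2 * (j+1) = 2*j+2 := by ring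
  have e2 : 2 * (j+1) - 1 = 2*j+1 := by omega
  have e3 : 2 * (j+1) - 2 = 2*j := by omega
  rw [e1, e2, e3] at *
  have hfac : ((2*j+2).factorial : ℝ) = ((2*(j:ℝ)+2)*(2*(j:ℝ)+1)) * ((2*j).factorial : ℝ) := by
    rw [show 2*j+2 = (2*j+1)+1 from rfl, Nat.factorial_succ, Nat.factorial_succ]
    push_cast; ring
  have hxne : x ≠ 0 := ne_of_gt hx
  have hpow : ((1:ℝ)/x)^(2*j+2) = 1/(x * x^(2*j+1)) := by
    rw [div_pow, one_pow, pow_succ']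
  have hq : (2:ℝ)^(2*j+2) = 2^(2*j+1) * 2 := by rw [pow_succ]
  rw [hfac, hpow, hq]
  push_cast
  have hfne : ((2*j).factorial : ℝ) ≠ 0 := by positivity
  have hx1 : x^(2*j+1) ≠ 0 := pow_ne_zero _ hxne
  generalize hb : ((bernoulli (2*j+2) : ℚ) : ℝ) = b
  generalize hF : ((2*j).factorial : ℝ) = F at hfne ⊢
  generalize hp : x^(2*j+1) = p at hx1 ⊢
  generalize hQ : (2:ℝ)^(2*j+1) = Q
  generalize hr : (j:ℝ) = r
  have hr0 : 0 ≤ r := hr ▸ Nat.cast_nonneg j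
  have h1 : r + 1 ≠ 0 := by positivity
  have h2 : 2*r + 1 ≠ 0 := by positivity
  rw [show (2*(r+1)-1 : ℝ) = 2*r+1 from by ring]
  field_simp

set_option maxHeartbeats 1000000 in
theorem remainder_estimate
    (hStirling : ∀ m : ℕ, 1 ≤ m → ∀ x : ℝ, 0 < x →
      (∑ k ∈ Finset.Icc 1 (2 * m),
          ((bernoulli (2 * k) : ℝ)) / ((2 * k) * (2 * k - 1) * x ^ (2 * k - 1))) <
        Real.log (Real.Gamma (x + 1)) - Real.log (Real.sqrt (2 * Real.pi * x))
          - x * Real.log x + x ∧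
      Real.log (Real.Gamma (x + 1)) - Real.log (Real.sqrt (2 * Real.pi * x))
          - x * Real.log x + x <
        (∑ k ∈ Finset.Icc 1 (2 * m - 1),
          ((bernoulli (2 * k) : ℝ)) / ((2 * k) * (2 * k - 1) * x ^ (2 * k - 1))))
    (hsinh : ∀ m : ℕ, 1 ≤ m → ∀ t : ℝ, 0 < t →
      (∑ k ∈ Finset.Icc 1 (2 * m),
          2 ^ (2 * k) * ((bernoulli (2 * k) : ℝ)) * t ^ (2 * k)
            / ((2 * k) * (Nat.factorial (2 * k)))) <
        Real.log (Real.sinh t / t) ∧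
      Real.log (Real.sinh t / t) <
        (∑ k ∈ Finset.Icc 1 (2 * m - 1),
          2 ^ (2 * k) * ((bernoulli (2 * k) : ℝ)) * t ^ (2 * k)
            / ((2 * k) * (Nat.factorial (2 * k)))))
    (a : ℕ → ℝ)
    (ha : ∀ k : ℕ, a k =
      (((2 * k) * Nat.factorial (2 * k - 2) : ℕ) - (2 : ℝ) ^ (2 * k - 1)) *
        (bernoulli (2 * k) : ℝ) / ((2 * k) * (Nat.factorial (2 * k))))
    (n : ℕ) (hn : 4 ≤ n) (x : ℝ) (hx : 0 < x) :
    |Real.log (Real.Gamma (x + 1)) - Real.log (Real.sqrt (2 * Real.pi))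
        - (x + 1 / 2) * Real.log x + x
        - (x / 2) * Real.log (x * Real.sinh (1 / x))
        - ∑ k ∈ Finset.Icc 3 (n - 1), a k / x ^ (2 * k - 1)| ≤
      |(bernoulli (2 * n) : ℝ)| / ((2 * n) * (2 * n - 1)) / x ^ (2 * n - 1) := by
  obtain ⟨N, rfl⟩ : ∃ N, n = N + 1 := ⟨n - 1, by omega⟩
  have hN3 : 3 ≤ N := by omega
  have htpos : (0:ℝ) < 1/x := by positivity
  have hxne : x ≠ 0 := ne_of_gt hx
  have hlogsqrt : Real.log (Real.sqrt (2*Real.pi*x))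
      = Real.log (Real.sqrt (2*Real.pi)) + Real.log x / 2 := by
    rw [Real.sqrt_mul (by positivity) x,
      Real.log_mul (ne_of_gt (Real.sqrt_pos.mpr (by positivity)))
        (ne_of_gt (Real.sqrt_pos.mpr hx)), Real.log_sqrt hx.le]
  have hL : Real.log (x * Real.sinh (1/x)) = Real.log (Real.sinh (1/x) / (1/x)) := by
    have h : Real.sinh (1/x) / (1/x) = x * Real.sinh (1/x) := by
      field_simp
    rw [h]
  have ha1 : a 1 = 0 := by rw [ha]; norm_num [Nat.factorial]
  have ha2 : a 2 = 0 := by rw [ha]; norm_num [Nat.factorial]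
  have hsum3 : ∑ k ∈ Finset.Icc 3 N, a k / x ^ (2*k-1)
      = (∑ k ∈ Finset.Icc 1 N, ((bernoulli (2*k) : ℝ)) / ((2*(k:ℝ)) * (2*(k:ℝ) - 1) * x ^ (2*k-1)))
        - x/2 * ∑ k ∈ Finset.Icc 1 N,
            (2:ℝ) ^ (2*k) * ((bernoulli (2*k) : ℝ)) * (1/x) ^ (2*k)
              / ((2*(k:ℝ)) * ((Nat.factorial (2*k)):ℝ)) := by
    rw [Finset.mul_sum, ← Finset.sum_sub_distrib]
    have hterm : ∀ k ∈ Finset.Icc 1 N, a k / x ^ (2*k-1)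
        = ((bernoulli (2*k) : ℝ)) / ((2*(k:ℝ)) * (2*(k:ℝ) - 1) * x ^ (2*k-1))
          - x/2 * ((2:ℝ) ^ (2*k) * ((bernoulli (2*k) : ℝ)) * (1/x) ^ (2*k)
              / ((2*(k:ℝ)) * ((Nat.factorial (2*k)):ℝ))) := by
      intro k hk
      rw [Finset.mem_Icc] at hk
      rw [ha k]
      exact term_split x hx k hk.1
    rw [← Finset.sum_congr rfl hterm]
    have hsplit : Finset.Icc 1 N = insert 1 (insert 2 (Finset.Icc 3 N)) := by
      ext m; simp only [Finset.mem_Icc, Finset.mem_insert]; omega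
    rw [hsplit,
      Finset.sum_insert (by simp only [Finset.mem_insert, Finset.mem_Icc]; omega),
      Finset.sum_insert (by simp only [Finset.mem_Icc]; omega),
      ha1, ha2, zero_div, zero_div, zero_add, zero_add]
  simp only [Nat.add_sub_cancel]
  rw [hsum3, hL]
  have key : Real.log (Real.Gamma (x + 1)) - Real.log (Real.sqrt (2 * Real.pi))
        - (x + 1 / 2) * Real.log x + x
        - x / 2 * Real.log (Real.sinh (1/x) / (1/x))
        - ((∑ k ∈ Finset.Icc 1 N, ((bernoulli (2*k) : ℝ)) / ((2*(k:ℝ)) * (2*(k:ℝ) - 1) * x ^ (2*k-1)))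
          - x/2 * ∑ k ∈ Finset.Icc 1 N,
              (2:ℝ) ^ (2*k) * ((bernoulli (2*k) : ℝ)) * (1/x) ^ (2*k)
                / ((2*(k:ℝ)) * ((Nat.factorial (2*k)):ℝ)))
      = ((Real.log (Real.Gamma (x + 1)) - Real.log (Real.sqrt (2*Real.pi*x)) - x * Real.log x + x)
          - (∑ k ∈ Finset.Icc 1 N, ((bernoulli (2*k) : ℝ)) / ((2*(k:ℝ)) * (2*(k:ℝ) - 1) * x ^ (2*k-1))))
        - (x/2 * Real.log (Real.sinh (1/x) / (1/x))
          - x/2 * ∑ k ∈ Finset.Icc 1 N,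
              (2:ℝ) ^ (2*k) * ((bernoulli (2*k) : ℝ)) * (1/x) ^ (2*k)
                / ((2*(k:ℝ)) * ((Nat.factorial (2*k)):ℝ))) := by
    rw [hlogsqrt]; ring
  rw [key]
  have hpow1 : ((1:ℝ)/x)^(2*(N+1)) = 1/(x * x^(2*(N+1)-1)) := by
    have e : x^(2*(N+1)) = x * x^(2*(N+1)-1) := by
      rw [← pow_succ']
      congr 1
      try omega
    rw [div_pow, one_pow, e]
  have hxp : (0:ℝ) < x ^ (2*(N+1)-1) := pow_pos hx _
  have hn1 : (4:ℝ) ≤ ((N+1 : ℕ) : ℝ) := by exact_mod_cast hn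
  have hDpos : (0:ℝ) < 2*((N+1:ℕ):ℝ) * (2*((N+1:ℕ):ℝ) - 1) := by nlinarith
  have h3 : (2*((N+1:ℕ):ℝ) - 1) = ((2*(N+1)-1 : ℕ) : ℝ) := by
    rw [Nat.cast_sub (by omega : 1 ≤ 2*(N+1))]; push_cast; ring
  have hfactR : (2:ℝ)^(2*(N+1)-1) * (2*((N+1:ℕ):ℝ) - 1) ≤ ((Nat.factorial (2*(N+1))):ℝ) := by
    rw [h3]; exact_mod_cast two_pow_fact (N+1) hn
  have hFpos : (0:ℝ) < ((Nat.factorial (2*(N+1))):ℝ) := by positivity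
  have hbR : |((bernoulli (2*(N+1)) : ℝ)) / ((2*((N+1:ℕ):ℝ)) * (2*((N+1:ℕ):ℝ) - 1) * x ^ (2*(N+1)-1))|
      = |(bernoulli (2*(N+1)) : ℝ)| / ((2*((N+1:ℕ):ℝ)) * (2*((N+1:ℕ):ℝ) - 1)) / x ^ (2*(N+1)-1) := by
    rw [abs_div, abs_of_pos (by nlinarith : (0:ℝ) < (2*((N+1:ℕ):ℝ)) * (2*((N+1:ℕ):ℝ) - 1) * x ^ (2*(N+1)-1)), div_div]
  have hcR : x/2 * |(2:ℝ) ^ (2*(N+1)) * ((bernoulli (2*(N+1)) : ℝ)) * (1/x) ^ (2*(N+1))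
        / ((2*((N+1:ℕ):ℝ)) * ((Nat.factorial (2*(N+1))):ℝ))|
      ≤ |(bernoulli (2*(N+1)) : ℝ)| / ((2*((N+1:ℕ):ℝ)) * (2*((N+1:ℕ):ℝ) - 1)) / x ^ (2*(N+1)-1) := by
    rw [abs_div, abs_mul, abs_mul, abs_of_pos (by positivity : (0:ℝ) < (2:ℝ)^(2*(N+1))),
      abs_of_pos (by positivity : (0:ℝ) < ((1:ℝ)/x)^(2*(N+1))),
      abs_of_pos (by positivity : (0:ℝ) < (2*((N+1:ℕ):ℝ)) * ((Nat.factorial (2*(N+1))):ℝ))]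
    have heq : x/2 * ((2:ℝ) ^ (2*(N+1)) * |(bernoulli (2*(N+1)) : ℝ)| * (1/x) ^ (2*(N+1))
          / ((2*((N+1:ℕ):ℝ)) * ((Nat.factorial (2*(N+1))):ℝ)))
        = (2:ℝ) ^ (2*(N+1)-1) * |(bernoulli (2*(N+1)) : ℝ)|
          / ((2*((N+1:ℕ):ℝ)) * ((Nat.factorial (2*(N+1))):ℝ)) / x ^ (2*(N+1)-1) := by
      rw [hpow1, show 2*(N+1) = (2*(N+1)-1) + 1 from by omega, pow_succ, Nat.add_sub_cancel]
      have hxpne : x ^ (2*(N+1)-1) ≠ 0 := ne_of_gt hxp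
      field_simp
    rw [heq, div_div, div_div, div_le_div_iff₀ (by positivity) (by positivity)]
    have hBnn : (0:ℝ) ≤ |(bernoulli (2*(N+1)) : ℝ)| := abs_nonneg _
    nlinarith [mul_le_mul_of_nonneg_left hfactR
        (mul_nonneg (mul_nonneg hBnn (le_of_lt hxp)) (by positivity : (0:ℝ) ≤ 2*((N+1:ℕ):ℝ))),
      mul_pos hDpos hxp]
  rw [abs_le]
  rcases Nat.even_or_odd (N+1) with ⟨m, hm⟩ | ⟨m, hm⟩
  · -- even : N+1 = m + m
    have hm1 : 1 ≤ m := by omega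
    obtain ⟨hS1, hS2⟩ := hStirling m hm1 x hx
    obtain ⟨hC1, hC2⟩ := hsinh m hm1 (1/x) htpos
    rw [show 2*m = N+1 from by omega] at hS1 hS2 hC1 hC2
    simp only [Nat.add_sub_cancel] at hS2 hC2
    rw [Finset.sum_Icc_succ_top (by omega : 1 ≤ N+1)] at hS1 hC1
    have hcn : (2:ℝ) ^ (2*(N+1)) * ((bernoulli (2*(N+1)) : ℝ)) * (1/x) ^ (2*(N+1))
          / ((2*((N+1:ℕ):ℝ)) * ((Nat.factorial (2*(N+1))):ℝ))
        < Real.log (Real.sinh (1/x) / (1/x))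
          - ∑ k ∈ Finset.Icc 1 N, (2:ℝ) ^ (2*k) * ((bernoulli (2*k) : ℝ)) * (1/x) ^ (2*k)
              / ((2*(k:ℝ)) * ((Nat.factorial (2*k)):ℝ)) := by linarith
    have hv0 : Real.log (Real.sinh (1/x) / (1/x))
        - ∑ k ∈ Finset.Icc 1 N, (2:ℝ) ^ (2*k) * ((bernoulli (2*k) : ℝ)) * (1/x) ^ (2*k)
            / ((2*(k:ℝ)) * ((Nat.factorial (2*k)):ℝ)) < 0 := by linarith
    have h5 := mul_lt_mul_of_pos_left hcn (by positivity : (0:ℝ) < x/2)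
    have h6 := mul_neg_of_pos_of_neg (by positivity : (0:ℝ) < x/2) hv0
    rw [mul_sub] at h5 h6
    have hcnneg : (2:ℝ) ^ (2*(N+1)) * ((bernoulli (2*(N+1)) : ℝ)) * (1/x) ^ (2*(N+1))
          / ((2*((N+1:ℕ):ℝ)) * ((Nat.factorial (2*(N+1))):ℝ)) < 0 := by linarith
    have habs1 : x/2 * |(2:ℝ) ^ (2*(N+1)) * ((bernoulli (2*(N+1)) : ℝ)) * (1/x) ^ (2*(N+1))
          / ((2*((N+1:ℕ):ℝ)) * ((Nat.factorial (2*(N+1))):ℝ))|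
        = -(x/2 * ((2:ℝ) ^ (2*(N+1)) * ((bernoulli (2*(N+1)) : ℝ)) * (1/x) ^ (2*(N+1))
          / ((2*((N+1:ℕ):ℝ)) * ((Nat.factorial (2*(N+1))):ℝ)))) := by
      rw [abs_of_neg hcnneg]; ring
    have hbneg : ((bernoulli (2*(N+1)) : ℝ)) / ((2*((N+1:ℕ):ℝ)) * (2*((N+1:ℕ):ℝ) - 1) * x ^ (2*(N+1)-1)) < 0 := by
      linarith
    have habs2 := abs_of_neg hbneg
    constructor
    · linarith [hbR, habs2]
    · linarith [hcR, habs1, h5]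
  · -- odd : N+1 = 2*m+1
    have hm2 : 2 ≤ m := by omega
    obtain ⟨hS1, hS2⟩ := hStirling (m+1) (by omega) x hx
    obtain ⟨hS1', hS2'⟩ := hStirling m (by omega) x hx
    obtain ⟨hC1, hC2⟩ := hsinh (m+1) (by omega) (1/x) htpos
    obtain ⟨hC1', hC2'⟩ := hsinh m (by omega) (1/x) htpos
    rw [show 2*(m+1) - 1 = N+1 from by omega] at hS2 hC2
    rw [show 2*m = N from by omega] at hS1' hC1'
    rw [Finset.sum_Icc_succ_top (by omega : 1 ≤ N+1)] at hS2 hC2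
    have hv0 : 0 < Real.log (Real.sinh (1/x) / (1/x))
        - ∑ k ∈ Finset.Icc 1 N, (2:ℝ) ^ (2*k) * ((bernoulli (2*k) : ℝ)) * (1/x) ^ (2*k)
            / ((2*(k:ℝ)) * ((Nat.factorial (2*k)):ℝ)) := by linarith
    have hcn : Real.log (Real.sinh (1/x) / (1/x))
          - ∑ k ∈ Finset.Icc 1 N, (2:ℝ) ^ (2*k) * ((bernoulli (2*k) : ℝ)) * (1/x) ^ (2*k)
              / ((2*(k:ℝ)) * ((Nat.factorial (2*k)):ℝ))
        < (2:ℝ) ^ (2*(N+1)) * ((bernoulli (2*(N+1)) : ℝ)) * (1/x) ^ (2*(N+1))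
          / ((2*((N+1:ℕ):ℝ)) * ((Nat.factorial (2*(N+1))):ℝ)) := by linarith
    have h5 := mul_lt_mul_of_pos_left hcn (by positivity : (0:ℝ) < x/2)
    have h6 := mul_pos (by positivity : (0:ℝ) < x/2) hv0
    rw [mul_sub] at h5 h6
    have hcnpos : (0:ℝ) < (2:ℝ) ^ (2*(N+1)) * ((bernoulli (2*(N+1)) : ℝ)) * (1/x) ^ (2*(N+1))
          / ((2*((N+1:ℕ):ℝ)) * ((Nat.factorial (2*(N+1))):ℝ)) := by linarith
    have habs1 : x/2 * |(2:ℝ) ^ (2*(N+1)) * ((bernoulli (2*(N+1)) : ℝ)) * (1/x) ^ (2*(N+1))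
          / ((2*((N+1:ℕ):ℝ)) * ((Nat.factorial (2*(N+1))):ℝ))|
        = x/2 * ((2:ℝ) ^ (2*(N+1)) * ((bernoulli (2*(N+1)) : ℝ)) * (1/x) ^ (2*(N+1))
          / ((2*((N+1:ℕ):ℝ)) * ((Nat.factorial (2*(N+1))):ℝ))) := by
      rw [abs_of_pos hcnpos]
    have hbpos : 0 < ((bernoulli (2*(N+1)) : ℝ)) / ((2*((N+1:ℕ):ℝ)) * (2*((N+1:ℕ):ℝ) - 1) * x ^ (2*(N+1)-1)) := by
      linarith
    have habs2 := abs_of_pos hbpos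
    constructor
    · linarith [hcR, habs1, h5]
    · linarith [hbR, habs2]
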